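/- Let X be a finite type (of genres) and α a type (of items). Let q : α → X → ℝ be nonnegative, w : ℕ → ℝ antitone and nonnegative, c : X → ℝ nonnegative, and φ : ℝ → ℝ nondecreasing and concave on [0, ∞), and define the calibration sequence function F on a list S = s₁ … s_k by F(S) = Σ_{x ∈ X} c(x)·φ(Σ_{i=1}^{k} w(i)·q(s_i, x)). Let r : α → ℝ be a nonnegative quality score and define the quality sequence function m(S) = Σ_{i=1}^{k} r(s_i). Then for any λ, μ ≥ 0, the combined objective λ·m + μ·F is ordered-submodular. -/

import Mathlib

/-- A sequence function `f : List α → ℝ` is **ordered-submodular** if for all lists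
`A, B` and elements `s, s̄`:
`f(A ++ [s]) − f(A) ≥ f(A ++ [s] ++ B) − f(A ++ [s̄] ++ B)`. -/
def OrderedSubmodular {α : Type*} (f : List α → ℝ) : Prop :=
  ∀ (A B : List α) (s sbar : α),
    f (A ++ [s] ++ B) - f (A ++ [sbar] ++ B) ≤ f (A ++ [s]) - f A

set_option linter.unusedVariables false

lemma conc_sub {φ : ℝ → ℝ} (h : ConcaveOn ℝ (Set.Ici 0) φ)
    {x y t : ℝ} (hx : 0 ≤ x) (hxy : x ≤ y) (ht : 0 ≤ t) :
    φ (y + t) - φ y ≤ φ (x + t) - φ x := by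
  rcases eq_or_lt_of_le ht with rfl | ht'
  · simp
  rcases eq_or_lt_of_le hxy with rfl | hxy'
  · exact le_refl _
  have hD : 0 < y + t - x := by linarith
  set θ : ℝ := (y - x) / (y + t - x) with hθdef
  have hθ0 : 0 ≤ θ := div_nonneg (by linarith) hD.le
  have hθ1 : θ ≤ 1 := by rw [hθdef, div_le_one hD]; linarith
  have hmx : x ∈ Set.Ici (0:ℝ) := hx
  have hmy : y + t ∈ Set.Ici (0:ℝ) := by simp; linarith
  have h1 := h.2 hmx hmy hθ0 (by linarith : (0:ℝ) ≤ 1 - θ) (by ring)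
  have h2 := h.2 hmx hmy (by linarith : (0:ℝ) ≤ 1 - θ) hθ0 (by ring)
  simp only [smul_eq_mul] at h1 h2
  have e1 : θ * x + (1 - θ) * (y + t) = x + t := by
    rw [hθdef]; field_simp; ring
  have e2 : (1 - θ) * x + θ * (y + t) = y := by
    rw [hθdef]; field_simp; ring
  rw [e1] at h1; rw [e2] at h2
  linarith

/-- combining quality and calibration.  With the calibration
objective `F(S) = Σ_{x ∈ X} c(x) · φ(Σ_{i=1}^{k} w(i) · q(s_i, x))` and the
modular quality objective `m(S) = Σ_{i=1}^{k} r(s_i)`, any nonnegative combination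
`λ·m + μ·F` is ordered-submodular. -/
theorem quality_plus_calibration_orderedSubmodular {X : Type*} [Fintype X]
    {α : Type*}
    (q : α → X → ℝ) (hq : ∀ i x, 0 ≤ q i x)
    (w : ℕ → ℝ) (hw_anti : ∀ i j : ℕ, i ≤ j → w j ≤ w i) (hw_nonneg : ∀ i, 0 ≤ w i)
    (c : X → ℝ) (hc : ∀ x, 0 ≤ c x)
    (φ : ℝ → ℝ) (hφ_mono : MonotoneOn φ (Set.Ici (0 : ℝ)))
    (hφ_conc : ConcaveOn ℝ (Set.Ici (0 : ℝ)) φ)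
    (r : α → ℝ) (hr : ∀ a, 0 ≤ r a)
    (lam mu : ℝ) (hlam : 0 ≤ lam) (hmu : 0 ≤ mu) :
    OrderedSubmodular (fun S : List α =>
      lam * (S.map r).sum +
        mu * ∑ x : X,
          c x * φ ((S.zipIdx.map (fun pr => w (pr.2 + 1) * q pr.1 x)).sum)) := by
  intro A B s sbar
  simp only []
  set n := A.length with hn
  -- notation for the genre sums
  set G : X → ℕ → List α → ℝ :=
    fun x k L => ((L.zipIdx k).map (fun pr => w (pr.2 + 1) * q pr.1 x)).sum with hG
  have hGnonneg : ∀ x k L, 0 ≤ G x k L := by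
    intro x k L
    apply List.sum_nonneg
    intro a ha
    simp only [List.mem_map] at ha
    obtain ⟨pr, _, rfl⟩ := ha
    exact mul_nonneg (hw_nonneg _) (hq _ _)
  -- enum decomposition
  have hdec : ∀ (u : α) (x : X),
      (((A ++ [u] ++ B).zipIdx).map (fun pr => w (pr.2 + 1) * q pr.1 x)).sum
        = G x 0 A + w (n + 1) * q u x + G x (n + 1) B := by
    intro u x
    rw [List.zipIdx_append, List.zipIdx_append, List.map_append, List.sum_append,
      List.map_append, List.sum_append]
    simp [hG, hn]
  have hdecA : ∀ (u : α) (x : X),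
      (((A ++ [u]).zipIdx).map (fun pr => w (pr.2 + 1) * q pr.1 x)).sum
        = G x 0 A + w (n + 1) * q u x := by
    intro u x
    rw [List.zipIdx_append, List.map_append, List.sum_append]
    simp [hG, hn]
  have hdecA0 : ∀ (x : X),
      ((A.zipIdx).map (fun pr => w (pr.2 + 1) * q pr.1 x)).sum = G x 0 A := by
    intro x; simp [hG]
  -- per-genre inequality
  have key : ∀ x : X,
      c x * φ (G x 0 A + w (n + 1) * q s x + G x (n + 1) B)
        - c x * φ (G x 0 A + w (n + 1) * q sbar x + G x (n + 1) B)
        ≤ c x * φ (G x 0 A + w (n + 1) * q s x) - c x * φ (G x 0 A) := by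
    intro x
    set a := G x 0 A with ha
    set b := G x (n + 1) B with hb
    have ha0 : 0 ≤ a := hGnonneg _ _ _
    have hb0 : 0 ≤ b := hGnonneg _ _ _
    have hu0 : 0 ≤ w (n + 1) * q s x := mul_nonneg (hw_nonneg _) (hq _ _)
    have hv0 : 0 ≤ w (n + 1) * q sbar x := mul_nonneg (hw_nonneg _) (hq _ _)
    set u := w (n + 1) * q s x
    set v := w (n + 1) * q sbar x
    have h1 : φ (a + b) ≤ φ (a + v + b) := by
      apply hφ_mono (by simp; linarith) (by simp; linarith); linarith
    have h2 : φ (a + b + u) - φ (a + b) ≤ φ (a + u) - φ a :=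
      conc_sub hφ_conc ha0 (by linarith) hu0
    have h3 : a + u + b = a + b + u := by ring
    rw [← mul_sub, ← mul_sub]
    apply mul_le_mul_of_nonneg_left _ (hc x)
    rw [h3]; linarith
  -- combine
  have hF : (∑ x : X, c x * φ (G x 0 A + w (n + 1) * q s x + G x (n + 1) B))
      - (∑ x : X, c x * φ (G x 0 A + w (n + 1) * q sbar x + G x (n + 1) B))
      ≤ (∑ x : X, c x * φ (G x 0 A + w (n + 1) * q s x))
        - (∑ x : X, c x * φ (G x 0 A)) := by
    rw [← Finset.sum_sub_distrib, ← Finset.sum_sub_distrib]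
    exact Finset.sum_le_sum fun x _ => key x
  have hm : ((A ++ [s] ++ B).map r).sum - ((A ++ [sbar] ++ B).map r).sum
      ≤ ((A ++ [s]).map r).sum - (A.map r).sum := by
    simp [List.map_append]
    have := hr sbar
    linarith
  simp only [hdec, hdecA, hdecA0]
  have e1 := mul_le_mul_of_nonneg_left hm hlam
  have e2 := mul_le_mul_of_nonneg_left hF hmu
  rw [mul_sub] at e1 e2
  linarith
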